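/- Let X, Y ∈ ℂ^{n×k} and set 𝒳 = [X conj(X)], 𝒴 = [Y conj(Y)] ∈ ℂ^{n×2k}. If the matrix M = (𝒳*𝒴 + 𝒴*𝒳)⁻¹ exists, then 𝒳 M 𝒴* is a real matrix. -/

import Mathlib

open Matrix

private noncomputable def Sw (k : ℕ) : Matrix (Fin k ⊕ Fin k) (Fin k ⊕ Fin k) ℂ :=
  fromBlocks 0 1 1 0

private lemma Sw_mul_Sw (k : ℕ) : Sw k * Sw k = 1 := by
  simp [Sw, Matrix.fromBlocks_multiply, ← Matrix.fromBlocks_one]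

private lemma Sw_conjTranspose (k : ℕ) : (Sw k)ᴴ = Sw k := by
  simp [Sw, Matrix.fromBlocks_conjTranspose]

private lemma fromColumns_map {m : Type*} {n₁ n₂ : Type*} (A : Matrix m n₁ ℂ) (B : Matrix m n₂ ℂ)
    (f : ℂ → ℂ) : (fromCols A B).map f = fromCols (A.map f) (B.map f) := by
  ext i j; cases j <;> simp [fromCols]

private lemma calX_map_conj {n k : ℕ} (X : Matrix (Fin n) (Fin k) ℂ) :
    (fromCols X (X.map (starRingEnd ℂ))).map (starRingEnd ℂ)
      = fromCols X (X.map (starRingEnd ℂ)) * Sw k := by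
  rw [fromColumns_map, Sw, fromCols_mul_fromBlocks]
  simp [Matrix.map_map, Function.comp_def]

theorem calX_inv_calY_conjTranspose_isReal
    {n k : ℕ} (X Y : Matrix (Fin n) (Fin k) ℂ)
    (M : Matrix (Fin k ⊕ Fin k) (Fin k ⊕ Fin k) ℂ)
    (hM : M * ((fromCols X (X.map (starRingEnd ℂ)))ᴴ * fromCols Y (Y.map (starRingEnd ℂ))
            + (fromCols Y (Y.map (starRingEnd ℂ)))ᴴ * fromCols X (X.map (starRingEnd ℂ))) = 1)
    (hM' : ((fromCols X (X.map (starRingEnd ℂ)))ᴴ * fromCols Y (Y.map (starRingEnd ℂ))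
            + (fromCols Y (Y.map (starRingEnd ℂ)))ᴴ * fromCols X (X.map (starRingEnd ℂ))) * M = 1) :
    ∀ i j, ((fromCols X (X.map (starRingEnd ℂ)) * M
        * (fromCols Y (Y.map (starRingEnd ℂ)))ᴴ) i j).im = 0 := by
  set c := starRingEnd ℂ
  set 𝒳 := fromCols X (X.map c) with h𝒳
  set 𝒴 := fromCols Y (Y.map c) with h𝒴
  set A := 𝒳ᴴ * 𝒴 + 𝒴ᴴ * 𝒳 with hA
  set S := Sw k with hS
  have hSS : S * S = 1 := Sw_mul_Sw k
  have hXc : 𝒳.map c = 𝒳 * S := calX_map_conj X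
  have hYc : 𝒴.map c = 𝒴 * S := calX_map_conj Y
  have hXHc : 𝒳ᴴ.map c = S * 𝒳ᴴ := by
    have : (𝒳.map c)ᴴ = 𝒳ᴴ.map c := by
      ext i j; simp [Matrix.conjTranspose_apply]
    rw [← this, hXc, Matrix.conjTranspose_mul, Sw_conjTranspose]
  have hYHc : 𝒴ᴴ.map c = S * 𝒴ᴴ := by
    have : (𝒴.map c)ᴴ = 𝒴ᴴ.map c := by
      ext i j; simp [Matrix.conjTranspose_apply]
    rw [← this, hYc, Matrix.conjTranspose_mul, Sw_conjTranspose]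
  have hAc : A.map c = S * A * S := by
    rw [hA, Matrix.map_add _ (map_add c), Matrix.map_mul, Matrix.map_mul, hXHc, hYHc, hXc, hYc]
    simp only [Matrix.mul_add, Matrix.add_mul, Matrix.mul_assoc]
  have hMc1 : (M.map c) * (S * A * S) = 1 := by
    rw [← hAc, ← Matrix.map_mul, hM]; ext i j; simp [Matrix.one_apply, apply_ite c]
  have hMc2 : (S * A * S) * (M.map c) = 1 := by
    rw [← hAc, ← Matrix.map_mul, hM']; ext i j; simp [Matrix.one_apply, apply_ite c]
  set N := S * (M.map c) * S with hN
  have hNA : N * A = 1 := by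
    calc N * A = N * A * (S * S) := by rw [hSS, Matrix.mul_one]
      _ = S * ((M.map c) * (S * A * S)) * S := by rw [hN]; simp only [Matrix.mul_assoc]
      _ = 1 := by rw [hMc1, Matrix.mul_one, hSS]
  have hAN : A * N = 1 := by
    calc A * N = (S * S) * (A * N) := by rw [hSS, Matrix.one_mul]
      _ = S * ((S * A * S) * (M.map c)) * S := by rw [hN]; simp only [Matrix.mul_assoc]
      _ = 1 := by rw [hMc2, Matrix.mul_one, hSS]
  have hMN : M = N := by
    calc M = M * (A * N) := by rw [hAN, Matrix.mul_one]
      _ = (M * A) * N := by rw [Matrix.mul_assoc]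
      _ = N := by rw [hM, Matrix.one_mul]
  have hMc : M.map c = S * M * S := by
    have h2 : S * (S * M.map c * S) * S = M.map c := by
      simp only [Matrix.mul_assoc]
      rw [hSS, Matrix.mul_one, ← Matrix.mul_assoc, hSS, Matrix.one_mul]
    conv_rhs => rw [hMN, hN]
    exact h2.symm
  have main : (𝒳 * M * 𝒴ᴴ).map c = 𝒳 * M * 𝒴ᴴ := by
    rw [Matrix.map_mul, Matrix.map_mul, hXc, hYHc, hMc]
    have h3 : 𝒳 * S * (S * M * S) * (S * 𝒴ᴴ) = 𝒳 * (S * S) * (M * ((S * S) * 𝒴ᴴ)) := by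
      simp only [Matrix.mul_add, Matrix.add_mul, Matrix.mul_assoc]
    rw [h3, hSS, Matrix.mul_one, Matrix.one_mul, ← Matrix.mul_assoc]
  intro i j
  have h : (starRingEnd ℂ) ((𝒳 * M * 𝒴ᴴ) i j) = (𝒳 * M * 𝒴ᴴ) i j :=
    congrFun (congrFun main i) j
  exact Complex.conj_eq_iff_im.mp h
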